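/- If B ∈ K[X] is a Belyi polynomial with 1 ≤ deg B < p and B(0) = 0, then every nonzero root of B has valuation v equal to 1, and every root of B−1 has valuation v equal to 1; that is, for all μ ∈ K with μ ≠ 0, if B(μ) = 0 then v(μ) = 1, and for all μ ∈ K, if B(μ) = 1 then v(μ) = 1. -/

import Mathlib

open Polynomial

section ValAux

variable {K : Type*} [Field K]

lemma belyi_val_nat_le_one (v : Valuation K NNReal) (m : ℕ) : v (m : K) ≤ 1 := by
  induction m with
  | zero => simp
  | succ m ih =>
    push_cast
    refine le_trans (v.map_add _ _) (max_le ih (by simp))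

lemma belyi_val_int_le_one (v : Valuation K NNReal) (m : ℤ) : v (m : K) ≤ 1 := by
  obtain ⟨a, rfl | rfl⟩ := m.eq_nat_or_neg
  · exact_mod_cast belyi_val_nat_le_one v a
  · push_cast
    rw [Valuation.map_neg]
    exact belyi_val_nat_le_one v a

lemma belyi_val_nat_eq_one (v : Valuation K NNReal) {p : ℕ} (hp : p.Prime)
    (hvp1 : v (p : K) < 1) {m : ℕ} (hm0 : 0 < m) (hmp : m < p) : v (m : K) = 1 := by
  refine le_antisymm (belyi_val_nat_le_one v m) ?_
  by_contra hlt
  push_neg at hlt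
  have hcop : Nat.Coprime m p := Nat.Coprime.symm
    ((Nat.Prime.coprime_iff_not_dvd hp).mpr (fun hdvd => absurd (Nat.le_of_dvd hm0 hdvd) (by omega)))
  obtain ⟨a, b, hab⟩ := Nat.isCoprime_iff_coprime.mpr hcop
  have h1 : (1 : K) = a * m + b * p := by exact_mod_cast congrArg (fun z : ℤ => (z : K)) hab.symm
  have : v (1 : K) < 1 := by
    rw [h1]
    refine lt_of_le_of_lt (v.map_add _ _) ?_
    rw [max_lt_iff]
    constructor
    · rw [v.map_mul]
      calc v (a : K) * v (m : K) ≤ 1 * v (m : K) :=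
            mul_le_mul_left (belyi_val_int_le_one v a) _
        _ = v (m : K) := one_mul _
        _ < 1 := hlt
    · rw [v.map_mul]
      calc v (b : K) * v (p : K) ≤ 1 * v (p : K) :=
            mul_le_mul_left (belyi_val_int_le_one v b) _
        _ = v (p : K) := one_mul _
        _ < 1 := hvp1
  simp at this

end ValAux

section MultisetAux

variable {α β : Type*} [DecidableEq α] [DecidableEq β]

lemma belyi_count_map_sub_dedup (f : α → β) (M : Multiset α) (c : β) :
    ((M - M.dedup).map f).count c + Multiset.card (M.dedup.filter (fun a => c = f a))
      = (M.map f).count c := by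
  rw [Multiset.count_map, Multiset.count_map, Multiset.filter_sub,
    Multiset.card_sub (Multiset.filter_le_filter _ (Multiset.dedup_le M))]
  have hle : Multiset.card (M.dedup.filter (fun a => c = f a))
      ≤ Multiset.card (M.filter (fun a => c = f a)) :=
    Multiset.card_le_card (Multiset.filter_le_filter _ (Multiset.dedup_le M))
  omega

lemma belyi_map_sub_dedup_le (f : α → β) (M : Multiset α) :
    (M - M.dedup).map f ≤ M.map f - (M.map f).dedup := by
  rw [Multiset.le_iff_count]
  intro c
  have h := belyi_count_map_sub_dedup f M c
  rw [Multiset.count_sub, Multiset.count_dedup]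
  by_cases hc : c ∈ M.map f
  · simp only [hc, if_true]
    obtain ⟨a, haM, hfa⟩ := Multiset.mem_map.mp hc
    have : 0 < Multiset.card (M.dedup.filter (fun a => c = f a)) := by
      rw [Multiset.card_pos_iff_exists_mem]
      exact ⟨a, Multiset.mem_filter.mpr ⟨Multiset.mem_dedup.mpr haM, hfa.symm⟩⟩
    omega
  · simp only [hc, if_false]
    have : (M.map f).count c = 0 := Multiset.count_eq_zero_of_notMem hc
    omega

lemma belyi_no_merge (f : α → β) (M : Multiset α)
    {x y : α} (hx : x ∈ M) (hy : y ∈ M) (hxy : x ≠ y) {c : β} (hfx : f x = c) (hfy : f y = c)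
    (hcount : ((M - M.dedup).map f).count c + 1 = (M.map f).count c) : False := by
  have hcnt := belyi_count_map_sub_dedup f M c
  have hxd : x ∈ M.dedup.filter (fun a => c = f a) :=
    Multiset.mem_filter.mpr ⟨Multiset.mem_dedup.mpr hx, hfx.symm⟩
  have hyd : y ∈ (M.dedup.filter (fun a => c = f a)).erase x :=
    (Multiset.mem_erase_of_ne (fun h => hxy h.symm)).mpr
      (Multiset.mem_filter.mpr ⟨Multiset.mem_dedup.mpr hy, hfy.symm⟩)
  have hfpos : 0 < Multiset.card (M.dedup.filter (fun a => c = f a)) :=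
    Multiset.card_pos_iff_exists_mem.mpr ⟨x, hxd⟩
  have hcard2 : Multiset.card ((M.dedup.filter (fun a => c = f a)).erase x)
      = Multiset.card (M.dedup.filter (fun a => c = f a)) - 1 := by
    rw [Multiset.card_erase_of_mem hxd, Nat.pred_eq_sub_one]
  have hpos := Multiset.card_pos_iff_exists_mem.mpr ⟨y, hyd⟩
  omega

end MultisetAux

section PolyAux

variable {K : Type*} [Field K]

lemma belyi_prod_linear_comp (M : Multiset K) {τ : K} (hτ : τ ≠ 0) :
    ((M.map (fun a => X - C a)).prod).comp (C τ * X)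
      = C (τ ^ Multiset.card M) * ((M.map (fun a => a / τ)).map (fun a => X - C a)).prod := by
  rw [multiset_prod_comp, Multiset.map_map, Multiset.map_map]
  have h : ∀ a ∈ M, (((fun (p : K[X]) => p.comp (C τ * X)) ∘ fun a => X - C a) a)
      = C τ * (X - C (a / τ)) := by
    intro a _
    simp only [Function.comp_apply, sub_comp, X_comp, C_comp]
    rw [mul_sub, ← C_mul, mul_div_cancel₀ _ hτ]
  rw [Multiset.map_congr rfl h]
  show (M.map (fun a => C τ * (X - C (a / τ)))).prod
      = C (τ ^ Multiset.card M) * (M.map (fun a => X - C (a / τ))).prod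
  have h2 : (M.map (fun a => C τ * (X - C (a / τ)))).prod
      = (M.map (fun _ => (C τ : K[X]))).prod * (M.map (fun a => X - C (a / τ))).prod := by
    rw [← Multiset.prod_map_mul]
  rw [h2, Multiset.map_const', Multiset.prod_replicate, ← C_pow]

end PolyAux

section CoreLemma

variable {k : Type*} [CommRing k] [IsDomain k] [DecidableEq k]

lemma belyi_prod_monic (U : Multiset k) : ((U.map (fun a => X - C a)).prod).Monic :=
  monic_multiset_prod_of_monic _ _ (fun a _ => monic_X_sub_C a)

lemma belyi_deriv_mult {U : Multiset k} {c : k} (hc : c ∈ U)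
    (hnz : ((U.count c : k)) ≠ 0) :
    (derivative (U.map (fun a => X - C a)).prod).rootMultiplicity c = U.count c - 1 := by
  set P := (U.map (fun a => X - C a)).prod with hP
  have hPne : P ≠ 0 := (belyi_prod_monic U).ne_zero
  have hroots : P.roots = U := roots_multiset_prod_X_sub_C U
  have hroot : P.IsRoot c := by
    have : c ∈ P.roots := by rw [hroots]; exact hc
    exact (Polynomial.mem_roots'.mp this).2
  have hmult : P.rootMultiplicity c = U.count c := by
    rw [← Polynomial.count_roots, hroots]
  rw [← hmult]
  exact derivative_rootMultiplicity_of_root_of_mem_nonZeroDivisors hroot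
    (by rw [hmult]; exact mem_nonZeroDivisors_of_ne_zero hnz)

lemma belyi_core (n : ℕ) (hcast : ∀ m : ℕ, 0 < m → m ≤ n → (m : k) ≠ 0)
    (U W U' W' : Multiset k) (e : k)
    (hU : Multiset.card U = n) (hW : Multiset.card W = n)
    (hU' : U' ≤ U - U.dedup) (hW' : W' ≤ W - W.dedup)
    (hcard : Multiset.card U' + Multiset.card W' + 1 = n)
    (h0U : (0 : k) ∈ U)
    (h1 : (1 : k) ∈ U ∨ (1 : k) ∈ W)
    (hP2 : (U.map (fun a => X - C a)).prod - C e = (W.map (fun a => X - C a)).prod)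
    (hP3 : derivative (U.map (fun a => X - C a)).prod
        = C (n : k) * ((U' + W').map (fun a => X - C a)).prod) :
    e ≠ 0 ∧ (∀ c ∈ U, U'.count c + 1 = U.count c)
        ∧ (∀ c ∈ W, W'.count c + 1 = W.count c)
        ∧ (∀ c : k, ¬(c ∈ U ∧ c ∈ W)) := by
  set P := (U.map (fun a => X - C a)).prod with hPdef
  set Q := (W.map (fun a => X - C a)).prod with hQdef
  have hn0 : 0 < n := by
    have := Multiset.card_pos_iff_exists_mem.mpr ⟨(0:k), h0U⟩
    omega
  have hnk : ((n : k)) ≠ 0 := hcast n hn0 le_rfl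
  have hUle : U' ≤ U := le_trans hU' (tsub_le_self)
  have hWle : W' ≤ W := le_trans hW' (tsub_le_self)
  -- root multiplicity of the derivative, computed from hP3
  have hder_count : ∀ c : k, (derivative P).rootMultiplicity c = U'.count c + W'.count c := by
    intro c
    rw [← Polynomial.count_roots, hP3, roots_C_mul _ hnk, roots_multiset_prod_X_sub_C,
      Multiset.count_add]
  have hcount_nz : ∀ (V : Multiset k), Multiset.card V = n → ∀ c ∈ V, ((V.count c : k)) ≠ 0 := by
    intro V hVcard c hcV
    refine hcast _ (Multiset.count_pos.mpr hcV) ?_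
    rw [← hVcard]; exact Multiset.count_le_card _ _
  have keyU : ∀ c ∈ U, U'.count c + W'.count c + 1 = U.count c := by
    intro c hc
    have h1' := belyi_deriv_mult hc (hcount_nz U hU c hc)
    rw [hder_count c] at h1'
    have h2 : 0 < U.count c := Multiset.count_pos.mpr hc
    omega
  have hderQ : derivative P = derivative Q := by
    rw [← hP2]; simp [derivative_sub]
  have keyW : ∀ c ∈ W, U'.count c + W'.count c + 1 = W.count c := by
    intro c hc
    have h1' := belyi_deriv_mult hc (hcount_nz W hW c hc)
    rw [← hQdef, ← hderQ, hder_count c] at h1'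
    have h2 : 0 < W.count c := Multiset.count_pos.mpr hc
    omega
  by_cases he : e = 0
  · -- contradiction case
    exfalso
    have hUW : U = W := by
      have : P = Q := by rw [← hP2, he, map_zero, sub_zero]
      have h1 : P.roots = U := roots_multiset_prod_X_sub_C U
      have h2 : Q.roots = W := roots_multiset_prod_X_sub_C W
      rw [← h1, ← h2, this]
    -- sum the count identity over U.toFinset
    have hsum : ∀ (V : Multiset k), V ≤ U →
        (∑ c ∈ U.toFinset, V.count c) = Multiset.card V := by
      intro V hV
      rw [← Multiset.toFinset_sum_count_eq V]
      refine (Finset.sum_subset ?_ ?_).symm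
      · intro x hx
        rw [Multiset.mem_toFinset] at hx ⊢
        exact Multiset.mem_of_le hV hx
      · intro x _ hx
        rw [Multiset.mem_toFinset] at hx
        exact Multiset.count_eq_zero_of_notMem hx
    have hsumU : (∑ c ∈ U.toFinset, U.count c) = n := by
      rw [Multiset.toFinset_sum_count_eq U, hU]
    have hsum' : (∑ c ∈ U.toFinset, (U'.count c + W'.count c + 1)) = n := by
      rw [← hsumU]
      refine Finset.sum_congr rfl ?_
      intro c hc
      exact keyU c (Multiset.mem_toFinset.mp hc)
    rw [Finset.sum_add_distrib, Finset.sum_add_distrib, Finset.sum_const, smul_eq_mul, mul_one,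
      hsum U' hUle, hsum W' (hUW ▸ hWle)] at hsum'
    have hcard1 : U.toFinset.card = 1 := by omega
    have h0' : (0:k) ∈ U.toFinset := Multiset.mem_toFinset.mpr h0U
    have h1'' : (1:k) ∈ U.toFinset := by
      rw [Multiset.mem_toFinset]
      rcases h1 with h | h
      · exact h
      · rw [hUW]; exact h
    have := Finset.card_le_one.mp hcard1.le _ h0' _ h1''
    exact zero_ne_one this
  · -- main case
    have hdisj : ∀ c : k, ¬(c ∈ U ∧ c ∈ W) := by
      rintro c ⟨hcU, hcW⟩
      exfalso; apply he
      have hPc : P.eval c = 0 := by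
        have : c ∈ P.roots := by rw [roots_multiset_prod_X_sub_C]; exact hcU
        exact (Polynomial.mem_roots'.mp this).2
      have hQc : Q.eval c = 0 := by
        have : c ∈ Q.roots := by rw [roots_multiset_prod_X_sub_C]; exact hcW
        exact (Polynomial.mem_roots'.mp this).2
      have := congrArg (Polynomial.eval c) hP2
      simp only [eval_sub, eval_C, hPc, hQc] at this
      linear_combination -this
    refine ⟨he, ?_, ?_, hdisj⟩
    · intro c hc
      have hkey := keyU c hc
      have hcW : c ∉ W := fun h => hdisj c ⟨hc, h⟩
      have : W'.count c = 0 := by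
        refine Multiset.count_eq_zero_of_notMem (fun h => hcW ?_)
        exact Multiset.mem_of_le hWle h
      omega
    · intro c hc
      have hkey := keyW c hc
      have hcU : c ∉ U := fun h => hdisj c ⟨h, hc⟩
      have : U'.count c = 0 := by
        refine Multiset.count_eq_zero_of_notMem (fun h => hcU ?_)
        exact Multiset.mem_of_le hUle h
      omega

end CoreLemma

section ResidueAux

variable {K : Type*} [Field K] (v : Valuation K NNReal)

/-- The maximal ideal of the valuation ring. -/
def belyiIdeal : Ideal v.integer where
  carrier := {x | v (x : K) < 1}
  add_mem' := by
    intro a b ha hb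
    simp only [Set.mem_setOf_eq] at *
    exact lt_of_le_of_lt (v.map_add _ _) (max_lt ha hb)
  zero_mem' := by simp
  smul_mem' := by
    intro r x hx
    simp only [Set.mem_setOf_eq, smul_eq_mul, Subring.coe_mul, v.map_mul] at *
    calc v (r : K) * v (x : K) ≤ 1 * v (x : K) := mul_le_mul_left r.2 _
      _ = v (x : K) := one_mul _
      _ < 1 := hx

lemma belyiIdeal_mem {x : v.integer} : x ∈ belyiIdeal v ↔ v (x : K) < 1 := Iff.rfl

lemma belyiIdeal_prime : (belyiIdeal v).IsPrime := by
  constructor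
  · intro h
    have : (1 : v.integer) ∈ belyiIdeal v := by rw [h]; trivial
    rw [belyiIdeal_mem] at this
    simp at this
  · intro x y hxy
    rw [belyiIdeal_mem] at hxy ⊢
    rw [belyiIdeal_mem]
    by_contra h
    push_neg at h
    obtain ⟨h1, h2⟩ := h
    have hx1 : v (x : K) = 1 := le_antisymm x.2 h1
    have hy1 : v (y : K) = 1 := le_antisymm y.2 h2
    rw [Subring.coe_mul, v.map_mul, hx1, hy1, mul_one] at hxy
    simp at hxy

lemma belyi_map_prod {A B : Type*} [CommRing A] [CommRing B] (f : A →+* B) (M : Multiset A) :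
    (((M.map (fun a => X - C a)).prod).map f : B[X]) = ((M.map f).map (fun a => X - C a)).prod := by
  rw [← Polynomial.coe_mapRingHom, map_multiset_prod, Multiset.map_map, Multiset.map_map]
  refine congrArg _ (Multiset.map_congr rfl ?_)
  intro a _
  simp only [Function.comp_apply, coe_mapRingHom, Polynomial.map_sub, map_X, map_C]

lemma belyi_transfer (σ : K → v.integer) {τ : K} (M : Multiset K)
    (hM : ∀ γ ∈ M, ((σ γ : K)) = γ / τ) :
    Polynomial.map (v.integer.subtype) ((M.map σ).map (fun a => X - C a)).prod
      = ((M.map (fun a => a / τ)).map (fun a => X - C a)).prod := by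
  rw [← Polynomial.coe_mapRingHom, map_multiset_prod, Multiset.map_map, Multiset.map_map,
    Multiset.map_map]
  refine congrArg _ (Multiset.map_congr rfl ?_)
  intro a ha
  simp only [Function.comp_apply, coe_mapRingHom, Polynomial.map_sub, map_X, map_C]
  show (X:K[X]) - C ((σ a : K)) = _
  rw [hM a ha]

end ResidueAux

/-- A polynomial `B` over a field `F` is a *Belyi polynomial* if `B 0 ∈ {0,1}`,
`B 1 ∈ {0,1}`, and the derivative `B'` divides `B * (B - 1)`. -/
def IsBelyi {F : Type*} [Field F] (B : F[X]) : Prop :=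
  B.eval 0 ∈ ({0, 1} : Set F) ∧ B.eval 1 ∈ ({0, 1} : Set F) ∧
    B.derivative ∣ B * (B - 1)

set_option maxHeartbeats 2000000 in
/-- If `B` is a Belyi polynomial with `1 ≤ deg B < p` and `B 0 = 0`, then every nonzero
root of `B` and every root of `B - 1` has valuation `1`. -/
theorem roots_of_small_belyi_have_valuation_one {K : Type*} [Field K] [IsAlgClosed K]
    [CharZero K] (p : ℕ) (hp : p.Prime) (v : Valuation K NNReal)
    (hvp0 : 0 < v (p : K)) (hvp1 : v (p : K) < 1)
    (B : K[X]) (hB : IsBelyi B) (hBdeg : 1 ≤ B.natDegree) (hBdeg' : B.natDegree < p)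
    (h0 : B.eval 0 = 0) :
    (∀ μ : K, μ ≠ 0 → B.eval μ = 0 → v μ = 1) ∧
    (∀ μ : K, B.eval μ = 1 → v μ = 1) := by
  classical
  obtain ⟨hB0set, hB1set, hdvd⟩ := hB
  set n := B.natDegree with hn
  have hne : B ≠ 0 := by
    intro h
    rw [hn, h, natDegree_zero] at hBdeg
    omega
  have hB1ne : B - 1 ≠ 0 := by
    intro h
    have hB1 : B = 1 := by linear_combination (norm := ring_nf) h
    rw [hn, hB1, natDegree_one] at hBdeg
    omega
  have hdegB1 : (B - 1).natDegree = n := by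
    have h1 : (B : K[X]) - 1 = B - C 1 := by rw [map_one]
    rw [h1, natDegree_sub_C]
  set c := B.leadingCoeff with hc
  have hcne : c ≠ 0 := leadingCoeff_ne_zero.mpr hne
  have hlcB1 : (B - 1).leadingCoeff = c := by
    rw [leadingCoeff, hdegB1]
    rw [coeff_sub]
    have h1 : (1 : K[X]).coeff n = 0 := by
      rw [← C_1, coeff_C, if_neg (by omega)]
    rw [h1, sub_zero, hc, leadingCoeff, hn]
  set R := B.roots with hR
  set S := (B - 1).roots with hS
  have hRcard : Multiset.card R = n := splits_iff_card_roots.mp (IsAlgClosed.splits B)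
  have hScard : Multiset.card S = n := by
    rw [hS, splits_iff_card_roots.mp (IsAlgClosed.splits _), hdegB1]
  have hmemR : ∀ γ : K, γ ∈ R ↔ B.eval γ = 0 := by
    intro γ
    rw [hR, mem_roots hne]
    exact Iff.rfl
  have hmemS : ∀ γ : K, γ ∈ S ↔ B.eval γ = 1 := by
    intro γ
    rw [hS, mem_roots hB1ne]
    unfold IsRoot
    rw [eval_sub, eval_one, sub_eq_zero]
  have h0R : (0 : K) ∈ R := (hmemR 0).mpr h0
  have h0S : (0 : K) ∉ S := by
    intro h
    rw [hmemS 0, h0] at h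
    exact zero_ne_one h
  have hdisjRS : ∀ γ : K, γ ∈ R → γ ∉ S := by
    intro γ h1 h2
    rw [hmemR] at h1
    rw [hmemS] at h2
    rw [h1] at h2
    exact zero_ne_one h2
  -- the derivative
  set D := derivative B with hD
  have hDne : D ≠ 0 := by
    intro h
    have := natDegree_eq_zero_of_derivative_eq_zero h
    omega
  have hnK : ((n : K)) ≠ 0 := Nat.cast_ne_zero.mpr (by omega)
  have hDcoeff : D.coeff (n - 1) = (n : K) * c := by
    rw [hD, coeff_derivative]
    have h1 : n - 1 + 1 = n := by omega
    rw [h1]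
    push_cast
    rw [Nat.cast_sub (by omega : 1 ≤ n), hc, leadingCoeff, hn]
    push_cast
    ring
  have hDdeg : D.natDegree = n - 1 := by
    refine le_antisymm (natDegree_derivative_le B) (le_natDegree_of_ne_zero ?_)
    rw [hDcoeff]
    exact mul_ne_zero hnK hcne
  have hDlc : D.leadingCoeff = (n : K) * c := by
    rw [leadingCoeff, hDdeg, hDcoeff]
  -- roots of the derivative
  have hDroots : D.roots = (R - R.dedup) + (S - S.dedup) := by
    refine Multiset.ext.mpr ?_
    intro γ
    rw [count_roots, Multiset.count_add, Multiset.count_sub, Multiset.count_dedup,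
      Multiset.count_sub, Multiset.count_dedup]
    by_cases hγR : γ ∈ R
    · have hroot : B.IsRoot γ := (hmemR γ).mp hγR
      have h1 : D.rootMultiplicity γ = B.rootMultiplicity γ - 1 :=
        derivative_rootMultiplicity_of_root hroot
      have h2 : B.rootMultiplicity γ = R.count γ := by rw [← count_roots, hR]
      have hγS : γ ∉ S := hdisjRS γ hγR
      have h3 : S.count γ = 0 := Multiset.count_eq_zero_of_notMem hγS
      rw [h1, h2, h3, if_pos hγR, if_neg hγS]
      omega
    · by_cases hγS : γ ∈ S
      · have hroot : (B - 1).IsRoot γ := by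
          unfold IsRoot
          rw [eval_sub, eval_one, sub_eq_zero]
          exact (hmemS γ).mp hγS
        have hD1 : D = derivative (B - 1) := by rw [derivative_sub, derivative_one, sub_zero]
        have h1 : D.rootMultiplicity γ = (B - 1).rootMultiplicity γ - 1 := by
          rw [hD1]
          exact derivative_rootMultiplicity_of_root hroot
        have h2 : (B - 1).rootMultiplicity γ = S.count γ := by rw [← count_roots, hS]
        have h3 : R.count γ = 0 := Multiset.count_eq_zero_of_notMem hγR
        rw [h1, h2, h3, if_pos hγS, if_neg hγR]
        omega
      · have h1 : D.rootMultiplicity γ = 0 := by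
          rw [rootMultiplicity_eq_zero_iff]
          intro habs
          exfalso
          have habs' : D.eval γ = 0 := habs
          obtain ⟨q, hq⟩ := hdvd
          have : (B * (B - 1)).eval γ = 0 := by
            rw [hq, eval_mul, habs', zero_mul]
          rw [eval_mul] at this
          rcases mul_eq_zero.mp this with h | h
          · exact hγR ((hmemR γ).mpr h)
          · apply hγS
            rw [hmemS γ]
            rw [eval_sub, eval_one, sub_eq_zero] at h
            exact h
        have h3 : R.count γ = 0 := Multiset.count_eq_zero_of_notMem hγR
        have h4 : S.count γ = 0 := Multiset.count_eq_zero_of_notMem hγS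
        rw [h1, h3, h4, if_neg hγR, if_neg hγS]
  set H := (R - R.dedup) + (S - S.dedup) with hH
  have hHcard : Multiset.card H = n - 1 := by
    rw [hH, ← hH, ← hDroots, splits_iff_card_roots.mp (IsAlgClosed.splits D), hDdeg]
  have hDeq : D = C ((n : K) * c) * (H.map (fun a => X - C a)).prod := by
    conv_lhs => rw [(IsAlgClosed.splits D).eq_prod_roots]
    rw [hDlc, hDroots]
  have hBeq : B = C c * (R.map (fun a => X - C a)).prod := by
    conv_lhs => rw [(IsAlgClosed.splits B).eq_prod_roots]
  have hB1eq : B - 1 = C c * (S.map (fun a => X - C a)).prod := by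
    conv_lhs => rw [(IsAlgClosed.splits (B - 1)).eq_prod_roots]
    rw [hlcB1]
  -- choose τ, a root of maximal valuation
  set T := R.filter (fun γ => γ ≠ 0) + S with hT
  have hTS : ∀ γ ∈ S, γ ∈ T := by
    intro γ hγ
    rw [hT]
    exact Multiset.mem_add.mpr (Or.inr hγ)
  have hTR : ∀ γ ∈ R, γ ≠ 0 → γ ∈ T := by
    intro γ hγ hγne
    rw [hT]
    exact Multiset.mem_add.mpr (Or.inl (Multiset.mem_filter.mpr ⟨hγ, hγne⟩))
  have hTne : T.toFinset.Nonempty := by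
    obtain ⟨β₀, hβ₀⟩ := Multiset.card_pos_iff_exists_mem.mp (show 0 < Multiset.card S by omega)
    exact ⟨β₀, Multiset.mem_toFinset.mpr (hTS β₀ hβ₀)⟩
  obtain ⟨τ, hτT', hτmax'⟩ := T.toFinset.exists_max_image v hTne
  have hτT : τ ∈ T := Multiset.mem_toFinset.mp hτT'
  have hτmax : ∀ γ ∈ T, v γ ≤ v τ := fun γ hγ => hτmax' γ (Multiset.mem_toFinset.mpr hγ)
  have hτne : τ ≠ 0 := by
    rcases Multiset.mem_add.mp hτT with h | h
    · intro h0'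
      rw [h0'] at h
      exact (Multiset.mem_filter.mp h).2 rfl
    · intro h0'
      rw [h0'] at h
      exact h0S h
  have hvτpos : 0 < v τ := by
    rw [pos_iff_ne_zero]
    exact fun h => hτne (v.zero_iff.mp h)
  have hvT : ∀ γ ∈ T, v (γ / τ) ≤ 1 := by
    intro γ hγ
    rw [map_div₀]
    exact (div_le_one hvτpos).mpr (hτmax γ hγ)
  have hvR : ∀ γ ∈ R, v (γ / τ) ≤ 1 := by
    intro γ hγ
    by_cases h : γ = 0
    · rw [h, zero_div, map_zero]
      exact zero_le
    · exact hvT γ (hTR γ hγ h)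
  have hvS : ∀ γ ∈ S, v (γ / τ) ≤ 1 := fun γ hγ => hvT γ (hTS γ hγ)
  have hvH : ∀ γ ∈ H, v (γ / τ) ≤ 1 := by
    intro γ hγ
    rcases Multiset.mem_add.mp hγ with h | h
    · exact hvR γ (Multiset.mem_of_le tsub_le_self h)
    · exact hvS γ (Multiset.mem_of_le tsub_le_self h)
  -- the constant ε and its valuation bound
  have hcτne : c * τ ^ n ≠ 0 := mul_ne_zero hcne (pow_ne_zero n hτne)
  set ε := (c * τ ^ n)⁻¹ with hε
  have hvcτ : 1 ≤ v c * v τ ^ n := by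
    have heval : (-1 : K) = c * (S.map (fun a => -a)).prod := by
      have h1 : (B - 1).eval 0 = -1 := by rw [eval_sub, eval_one, h0, zero_sub]
      have h2 : (B - 1).eval 0 = c * (S.map (fun a => -a)).prod := by
        rw [hB1eq, eval_mul, eval_C, eval_multiset_prod, Multiset.map_map]
        congr 1
        refine congrArg _ (Multiset.map_congr rfl ?_)
        intro a _
        simp
      rw [← h1, h2]
    have hv1 : (1 : NNReal) = v c * ((S.map (fun a => -a)).map v).prod := by
      have := congrArg v heval
      rw [Valuation.map_neg, map_one, map_mul, map_multiset_prod] at this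
      rw [this, Multiset.map_map]
    have hprodle : ((S.map (fun a => -a)).map v).prod ≤ v τ ^ n := by
      have := Multiset.prod_le_pow_card ((S.map (fun a => -a)).map v) (v τ) ?_
      · simpa [hScard] using this
      · intro x hx
        obtain ⟨y, hy, rfl⟩ := Multiset.mem_map.mp hx
        obtain ⟨z, hz, rfl⟩ := Multiset.mem_map.mp hy
        rw [Valuation.map_neg]
        exact hτmax z (hTS z hz)
    calc (1 : NNReal) = v c * ((S.map (fun a => -a)).map v).prod := hv1
      _ ≤ v c * v τ ^ n := mul_le_mul_right hprodle _
  have hvε : v ε ≤ 1 := by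
    rw [hε, map_inv₀, map_mul, map_pow]
    exact inv_le_one_of_one_le₀ hvcτ
  -- scaled product polynomials over K
  set ΦR : K[X] := ((R.map (fun a => a / τ)).map (fun a => X - C a)).prod with hΦR
  set ΦS : K[X] := ((S.map (fun a => a / τ)).map (fun a => X - C a)).prod with hΦS
  set ΦH : K[X] := ((H.map (fun a => a / τ)).map (fun a => X - C a)).prod with hΦH
  have hcompB : B.comp (C τ * X) = C (c * τ ^ n) * ΦR := by
    conv_lhs => rw [hBeq]
    rw [mul_comp, C_comp, belyi_prod_linear_comp _ hτne, hRcard, ← mul_assoc, ← C_mul]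
  have hcompB1 : (B - 1).comp (C τ * X) = C (c * τ ^ n) * ΦS := by
    conv_lhs => rw [hB1eq]
    rw [mul_comp, C_comp, belyi_prod_linear_comp _ hτne, hScard, ← mul_assoc, ← C_mul]
  have hcompD : D.comp (C τ * X) = C ((n : K) * c * τ ^ (n - 1)) * ΦH := by
    conv_lhs => rw [hDeq]
    rw [mul_comp, C_comp, belyi_prod_linear_comp _ hτne, hHcard, ← mul_assoc, ← C_mul]
  have hK1 : ΦR - C ε = ΦS := by
    apply mul_left_cancel₀ (show (C (c * τ ^ n) : K[X]) ≠ 0 by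
      rw [Ne, C_eq_zero]; exact hcτne)
    rw [mul_sub, ← hcompB, ← hcompB1, ← C_mul, hε, mul_inv_cancel₀ hcτne, sub_comp, one_comp, C_1]
  have hK2 : derivative ΦR = C (n : K) * ΦH := by
    apply mul_left_cancel₀ (show (C (c * τ ^ n) : K[X]) ≠ 0 by
      rw [Ne, C_eq_zero]; exact hcτne)
    have h1 : C (c * τ ^ n) * derivative ΦR = derivative (B.comp (C τ * X)) := by
      rw [hcompB, derivative_C_mul]
    rw [h1, derivative_comp]
    have h2 : derivative (C τ * X) = C τ := by
      rw [derivative_C_mul, derivative_X, mul_one]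
    rw [h2, ← hD, hcompD]
    rw [← mul_assoc, ← C_mul]
    have h3 : C (c * τ ^ n) * (C (n : K) * ΦH) = C (c * τ ^ n * (n : K)) * ΦH := by
      rw [← mul_assoc, ← C_mul]
    rw [h3]
    congr 1
    rw [C_inj]
    have hτn : τ ^ (n - 1) * τ = τ ^ n := by rw [← pow_succ, show n - 1 + 1 = n by omega]
    linear_combination ((n : K) * c) * hτn
  -- residue ring
  haveI hmprime : (belyiIdeal v).IsPrime := belyiIdeal_prime v
  set mk : v.integer →+* (v.integer ⧸ belyiIdeal v) := Ideal.Quotient.mk (belyiIdeal v) with hmk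
  set σ : K → v.integer := fun x => if h : v (x / τ) ≤ 1 then ⟨x / τ, h⟩ else 0 with hσ
  set ρ : K → (v.integer ⧸ belyiIdeal v) := fun x => mk (σ x) with hρ
  have hσval : ∀ x : K, v (x / τ) ≤ 1 → ((σ x : K)) = x / τ := by
    intro x hx
    rw [hσ]
    simp only [hx, dif_pos]
  have hρ0 : ρ 0 = 0 := by
    have h : v ((0 : K) / τ) ≤ 1 := by
      rw [zero_div, map_zero]
      exact zero_le
    have hσ0 : σ 0 = 0 := Subtype.ext (by rw [hσval 0 h, zero_div]; rfl)
    rw [hρ]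
    simp only [hσ0, map_zero]
  have hρτ : ρ τ = 1 := by
    have h : v (τ / τ) ≤ 1 := by rw [div_self hτne, map_one]
    have hστ : σ τ = 1 := Subtype.ext (by rw [hσval τ h, div_self hτne]; rfl)
    rw [hρ]
    simp only [hστ, map_one]
  have hρeq0 : ∀ γ : K, v (γ / τ) ≤ 1 → (ρ γ = 0 ↔ v γ < v τ) := by
    intro γ hγ
    rw [hρ]
    show mk (σ γ) = 0 ↔ _
    rw [hmk, Ideal.Quotient.eq_zero_iff_mem, belyiIdeal_mem, hσval γ hγ, map_div₀]
    exact div_lt_one hvτpos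
  -- multisets over the residue ring
  set U := R.map ρ with hUdef
  set W := S.map ρ with hWdef
  set U' := (R - R.dedup).map ρ with hU'def
  set W' := (S - S.dedup).map ρ with hW'def
  -- integral polynomials
  set PO := ((R.map σ).map (fun a => X - C a)).prod with hPO
  set QO := ((S.map σ).map (fun a => X - C a)).prod with hQO
  set HO := ((H.map σ).map (fun a => X - C a)).prod with hHOdef
  have hmapinj : Function.Injective
      (Polynomial.map (v.integer.subtype) : v.integer[X] → K[X]) :=
    Polynomial.map_injective _ Subtype.val_injective
  have hσR : ∀ γ ∈ R, ((σ γ : K)) = γ / τ := fun γ h => hσval γ (hvR γ h)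
  have hσS : ∀ γ ∈ S, ((σ γ : K)) = γ / τ := fun γ h => hσval γ (hvS γ h)
  have hσH : ∀ γ ∈ H, ((σ γ : K)) = γ / τ := fun γ h => hσval γ (hvH γ h)
  have hPOmap : PO.map v.integer.subtype = ΦR := by
    rw [hPO, belyi_transfer v σ R hσR, hΦR]
  have hQOmap : QO.map v.integer.subtype = ΦS := by
    rw [hQO, belyi_transfer v σ S hσS, hΦS]
  have hHOmap : HO.map v.integer.subtype = ΦH := by
    rw [hHOdef, belyi_transfer v σ H hσH, hΦH]
  set εO : v.integer := ⟨ε, hvε⟩ with hεOdef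
  have hO1 : PO - C εO = QO := by
    apply hmapinj
    rw [Polynomial.map_sub, Polynomial.map_C, hPOmap, hQOmap]
    exact hK1
  have hO2 : derivative PO = C ((n : ℕ) : v.integer) * HO := by
    apply hmapinj
    rw [← Polynomial.derivative_map, hPOmap, hK2, Polynomial.map_mul, Polynomial.map_C,
      hHOmap, map_natCast v.integer.subtype, C_eq_natCast]
  -- reduce mod the maximal ideal
  have htrans : ∀ M : Multiset K,
      (((M.map σ).map (fun a => X - C a)).prod).map mk
        = ((M.map ρ).map (fun a => X - C a)).prod := by
    intro M
    rw [belyi_map_prod]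
    simp only [Multiset.map_map]
    refine congrArg _ (Multiset.map_congr rfl ?_)
    intro a _
    simp [hρ]
  have hmapU : PO.map mk = (U.map (fun a => X - C a)).prod := by
    rw [hPO, htrans R, hUdef]
  have hmapW : QO.map mk = (W.map (fun a => X - C a)).prod := by
    rw [hQO, htrans S, hWdef]
  have hmapH : HO.map mk = ((U' + W').map (fun a => X - C a)).prod := by
    rw [hHOdef, htrans H, hU'def, hW'def, hH, Multiset.map_add]
  have hk1 : (U.map (fun a => X - C a)).prod - C (mk εO) = (W.map (fun a => X - C a)).prod := by
    have := congrArg (Polynomial.map mk) hO1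
    rw [Polynomial.map_sub, Polynomial.map_C, hmapU, hmapW] at this
    exact this
  have hk2 : derivative ((U.map (fun a => X - C a)).prod)
      = C ((n : ℕ) : v.integer ⧸ belyiIdeal v) * ((U' + W').map (fun a => X - C a)).prod := by
    have h := congrArg (Polynomial.map mk) hO2
    rw [Polynomial.map_mul, Polynomial.map_C, ← Polynomial.derivative_map, hmapU, hmapH,
      map_natCast mk] at h
    exact h
  -- apply the residue-field lemma
  have hcast : ∀ m : ℕ, 0 < m → m ≤ n → ((m : ℕ) : v.integer ⧸ belyiIdeal v) ≠ 0 := by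
    intro m hm0 hmn
    have h1 : ((m : ℕ) : v.integer ⧸ belyiIdeal v) = mk ((m : ℕ) : v.integer) := by
      rw [map_natCast]
    rw [h1, hmk, Ne, Ideal.Quotient.eq_zero_iff_mem, belyiIdeal_mem]
    have h2 : (((m : ℕ) : v.integer) : K) = ((m : ℕ) : K) := by push_cast; rfl
    rw [h2, belyi_val_nat_eq_one v hp hvp1 hm0 (by omega)]
    simp
  have hUcard : Multiset.card U = n := by rw [hUdef, Multiset.card_map, hRcard]
  have hWcard : Multiset.card W = n := by rw [hWdef, Multiset.card_map, hScard]
  have hU'le : U' ≤ U - U.dedup := belyi_map_sub_dedup_le ρ R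
  have hW'le : W' ≤ W - W.dedup := belyi_map_sub_dedup_le ρ S
  have hcardU'W' : Multiset.card U' + Multiset.card W' + 1 = n := by
    have h1 : Multiset.card U' = Multiset.card (R - R.dedup) := Multiset.card_map _ _
    have h2 : Multiset.card W' = Multiset.card (S - S.dedup) := Multiset.card_map _ _
    have h3 := hHcard
    rw [hH, Multiset.card_add] at h3
    omega
  have h0U : (0 : v.integer ⧸ belyiIdeal v) ∈ U :=
    Multiset.mem_map.mpr ⟨0, h0R, hρ0⟩
  have h1UW : (1 : v.integer ⧸ belyiIdeal v) ∈ U ∨ (1 : v.integer ⧸ belyiIdeal v) ∈ W := by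
    rcases Multiset.mem_add.mp hτT with h | h
    · exact Or.inl (Multiset.mem_map.mpr ⟨τ, Multiset.mem_of_mem_filter h, hρτ⟩)
    · exact Or.inr (Multiset.mem_map.mpr ⟨τ, h, hρτ⟩)
  obtain ⟨hεne, hcU, hcW, hdisj⟩ := belyi_core n hcast U W U' W' (mk εO)
    hUcard hWcard hU'le hW'le hcardU'W' h0U h1UW hk1 hk2
  -- every root γ of B·(B-1) with γ ≠ 0 has v γ = v τ
  have hvalT : ∀ μ ∈ T, v μ = v τ := by
    intro μ hμ
    have hvle : v μ ≤ v τ := hτmax μ hμ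
    have hvd : v (μ / τ) ≤ 1 := hvT μ hμ
    have hρμ : ρ μ ≠ 0 := by
      intro hρμ0
      rcases Multiset.mem_add.mp hμ with hf | hsm
      · have hμR : μ ∈ R := Multiset.mem_of_mem_filter hf
        have hμne : μ ≠ 0 := (Multiset.mem_filter.mp hf).2
        have h0U' := hcU 0 h0U
        rw [hU'def, hUdef] at h0U'
        exact belyi_no_merge ρ R h0R hμR (fun h => hμne h.symm) hρ0 hρμ0 h0U'
      · exact hdisj 0 ⟨h0U, Multiset.mem_map.mpr ⟨μ, hsm, hρμ0⟩⟩
    have hnlt : ¬ v μ < v τ := fun hlt => hρμ ((hρeq0 μ hvd).mpr hlt)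
    exact le_antisymm hvle (not_lt.mp hnlt)
  have h1T : (1 : K) ∈ T := by
    rcases hB1set with h | h
    · exact hTR 1 ((hmemR 1).mpr h) one_ne_zero
    · exact hTS 1 ((hmemS 1).mpr (by simpa using h))
  have hvτ1 : v τ = 1 := by
    have h := hvalT 1 h1T
    rw [map_one] at h
    exact h.symm
  constructor
  · intro μ hμne hμ0
    rw [hvalT μ (hTR μ ((hmemR μ).mpr hμ0) hμne), hvτ1]
  · intro μ hμ1
    rw [hvalT μ (hTS μ ((hmemS μ).mpr hμ1)), hvτ1]
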